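/- Let V be a finite set and let M be an independence model over V satisfying CI0, CI1 and CI2. Then the set e(M) of elementary triplets derived from M satisfies ci2: for all distinct i,j,k ∈ V and L ⊆ V∖{i,j,k}, if i⊥j|{k}∪L ∈ e(M) and i⊥k|{j}∪L ∈ e(M), then i⊥j|L ∈ e(M) and i⊥k|L ∈ e(M). -/
import Mathlib


variable {V : Type*} [DecidableEq V]

/-- CI0 (symmetry): for all pairwise disjoint `I J K`, `I ⊥ J | K ∈ M ↔ J ⊥ I | K ∈ M`. -/
def CI0 (M : Set (Finset V × Finset V × Finset V)) : Prop :=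
  ∀ I J K : Finset V, Disjoint I J → Disjoint I K → Disjoint J K →
    ((I, J, K) ∈ M ↔ (J, I, K) ∈ M)

/-- CI1: for all pairwise disjoint `I J K L`,
`(I ⊥ J | K ∪ L ∈ M and I ⊥ K | L ∈ M) ↔ I ⊥ J ∪ K | L ∈ M`. -/
def CI1 (M : Set (Finset V × Finset V × Finset V)) : Prop :=
  ∀ I J K L : Finset V, Disjoint I J → Disjoint I K → Disjoint I L →
    Disjoint J K → Disjoint J L → Disjoint K L →
    (((I, J, K ∪ L) ∈ M ∧ (I, K, L) ∈ M) ↔ (I, J ∪ K, L) ∈ M)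

/-- CI2 (intersection): for all pairwise disjoint `I J K L`,
`(I ⊥ J | K ∪ L ∈ M and I ⊥ K | J ∪ L ∈ M) → (I ⊥ J | L ∈ M and I ⊥ K | L ∈ M)`. -/
def CI2 (M : Set (Finset V × Finset V × Finset V)) : Prop :=
  ∀ I J K L : Finset V, Disjoint I J → Disjoint I K → Disjoint I L →
    Disjoint J K → Disjoint J L → Disjoint K L →
    ((I, J, K ∪ L) ∈ M ∧ (I, K, J ∪ L) ∈ M) → ((I, J, L) ∈ M ∧ (I, K, L) ∈ M)

/-- ci2: for all distinct `i j k` and `L ⊆ V \ {i, j, k}`,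
`(i ⊥ j | {k} ∪ L ∈ E and i ⊥ k | {j} ∪ L ∈ E) → (i ⊥ j | L ∈ E and i ⊥ k | L ∈ E)`. -/
def ci2 (E : Set (V × V × Finset V)) : Prop :=
  ∀ (i j k : V) (L : Finset V), i ≠ j → i ≠ k → j ≠ k → i ∉ L → j ∉ L → k ∉ L →
    ((i, j, insert k L) ∈ E ∧ (i, k, insert j L) ∈ E) →
      ((i, j, L) ∈ E ∧ (i, k, L) ∈ E)

/-- `e(M)`: the elementary triplets `i ⊥ j | M'` such that there is `I ⊥ J | K ∈ M` with
`i ∈ I`, `j ∈ J` and `K ⊆ M' ⊆ (I \ {i}) ∪ (J \ {j}) ∪ K`. -/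
def eMap (M : Set (Finset V × Finset V × Finset V)) : Set (V × V × Finset V) :=
  { T | ∃ I J K : Finset V, (I, J, K) ∈ M ∧ T.1 ∈ I ∧ T.2.1 ∈ J ∧
      K ⊆ T.2.2 ∧ T.2.2 ⊆ I.erase T.1 ∪ J.erase T.2.1 ∪ K }

lemma mem_eMap_iff (M : Set (Finset V × Finset V × Finset V))
    (hM : ∀ T ∈ M, Disjoint T.1 T.2.1 ∧ Disjoint T.1 T.2.2 ∧ Disjoint T.2.1 T.2.2)
    (h0 : CI0 M) (h1 : CI1 M) (i j : V) (M' : Finset V) :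
    (i, j, M') ∈ eMap M ↔ ({i}, {j}, M') ∈ M := by
  constructor
  · rintro ⟨I, J, K, hmem, hi, hj, hKM, hsub⟩
    obtain ⟨hIJ, hIK, hJK⟩ := hM _ hmem
    set A := M' ∩ I.erase i with hA
    set B := M' ∩ J.erase j with hB
    set A' := I.erase i \ A with hA'
    set B' := J.erase j \ B with hB'
    have hIe : A ∪ A' = I.erase i := Finset.union_sdiff_of_subset Finset.inter_subset_right
    have hJe : B ∪ B' = J.erase j := Finset.union_sdiff_of_subset Finset.inter_subset_right
    have hIeq : I = A' ∪ ({i} ∪ A) := by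
      rw [Finset.union_comm A', Finset.union_assoc, hIe, ← Finset.insert_eq,
        Finset.insert_erase hi]
    have hJeq : J = B' ∪ ({j} ∪ B) := by
      rw [Finset.union_comm B', Finset.union_assoc, hJe, ← Finset.insert_eq,
        Finset.insert_erase hj]
    have hM'eq : M' = A ∪ (B ∪ K) := by
      apply Finset.Subset.antisymm
      · intro x hx
        have h' := hsub hx
        simp only [Finset.mem_union] at h' ⊢
        rcases h' with (h | h) | h
        · exact Or.inl (Finset.mem_inter.mpr ⟨hx, h⟩)
        · exact Or.inr (Or.inl (Finset.mem_inter.mpr ⟨hx, h⟩))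
        · exact Or.inr (Or.inr h)
      · exact Finset.union_subset Finset.inter_subset_left
          (Finset.union_subset Finset.inter_subset_left hKM)
    -- subset facts
    have si : ({i} : Finset V) ⊆ I := Finset.singleton_subset_iff.mpr hi
    have sj : ({j} : Finset V) ⊆ J := Finset.singleton_subset_iff.mpr hj
    have sA : A ⊆ I := Finset.inter_subset_right.trans (Finset.erase_subset i I)
    have sA' : A' ⊆ I := Finset.sdiff_subset.trans (Finset.erase_subset i I)
    have sB : B ⊆ J := Finset.inter_subset_right.trans (Finset.erase_subset j J)
    have sB' : B' ⊆ J := Finset.sdiff_subset.trans (Finset.erase_subset j J)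
    -- within-set disjointness
    have diA : Disjoint ({i} : Finset V) A := Finset.disjoint_singleton_left.mpr
      (fun h => Finset.notMem_erase i I (Finset.mem_of_mem_inter_right h))
    have diA' : Disjoint ({i} : Finset V) A' := Finset.disjoint_singleton_left.mpr
      (fun h => Finset.notMem_erase i I (Finset.mem_sdiff.mp h).1)
    have dAA' : Disjoint A A' := Finset.disjoint_sdiff
    have djB : Disjoint ({j} : Finset V) B := Finset.disjoint_singleton_left.mpr
      (fun h => Finset.notMem_erase j J (Finset.mem_of_mem_inter_right h))
    have djB' : Disjoint ({j} : Finset V) B' := Finset.disjoint_singleton_left.mpr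
      (fun h => Finset.notMem_erase j J (Finset.mem_sdiff.mp h).1)
    have dBB' : Disjoint B B' := Finset.disjoint_sdiff
    -- derivation
    have st1 : (I, {j} ∪ B, K) ∈ M := by
      have h := (h1 I B' ({j} ∪ B) K
        (hIJ.mono_right sB')
        (hIJ.mono_right (Finset.union_subset sj sB))
        hIK
        (Finset.disjoint_union_right.mpr ⟨djB'.symm, dBB'.symm⟩)
        (hJK.mono_left sB')
        (hJK.mono_left (Finset.union_subset sj sB))).mpr (by rw [← hJeq]; exact hmem)
      exact h.2
    have st2 : ({j} ∪ B, I, K) ∈ M :=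
      (h0 I ({j} ∪ B) K (hIJ.mono_right (Finset.union_subset sj sB)) hIK
        (hJK.mono_left (Finset.union_subset sj sB))).mp st1
    have st3 : ({j} ∪ B, {i} ∪ A, K) ∈ M := by
      have h := (h1 ({j} ∪ B) A' ({i} ∪ A) K
        (hIJ.symm.mono (Finset.union_subset sj sB) sA')
        (hIJ.symm.mono (Finset.union_subset sj sB) (Finset.union_subset si sA))
        (hJK.mono_left (Finset.union_subset sj sB))
        (Finset.disjoint_union_right.mpr ⟨diA'.symm, dAA'.symm⟩)
        (hIK.mono_left sA')
        (hIK.mono_left (Finset.union_subset si sA))).mpr (by rw [← hIeq]; exact st2)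
      exact h.2
    have st4 : ({i} ∪ A, {j} ∪ B, K) ∈ M :=
      (h0 ({j} ∪ B) ({i} ∪ A) K
        (hIJ.symm.mono (Finset.union_subset sj sB) (Finset.union_subset si sA))
        (hJK.mono_left (Finset.union_subset sj sB))
        (hIK.mono_left (Finset.union_subset si sA))).mp st3
    have st5 : ({i} ∪ A, {j}, B ∪ K) ∈ M := by
      have h := (h1 ({i} ∪ A) {j} B K
        (hIJ.mono (Finset.union_subset si sA) sj)
        (hIJ.mono (Finset.union_subset si sA) sB)
        (hIK.mono_left (Finset.union_subset si sA))
        djB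
        (hJK.mono_left sj)
        (hJK.mono_left sB)).mpr st4
      exact h.1
    have st6 : ({j}, {i} ∪ A, B ∪ K) ∈ M :=
      (h0 ({i} ∪ A) {j} (B ∪ K)
        (hIJ.mono (Finset.union_subset si sA) sj)
        (Finset.disjoint_union_right.mpr
          ⟨hIJ.mono (Finset.union_subset si sA) sB,
           hIK.mono_left (Finset.union_subset si sA)⟩)
        (Finset.disjoint_union_right.mpr ⟨djB, hJK.mono_left sj⟩)).mp st5
    have st7 : ({j}, {i}, A ∪ (B ∪ K)) ∈ M := by
      have h := (h1 {j} {i} A (B ∪ K)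
        (hIJ.symm.mono sj si)
        (hIJ.symm.mono sj sA)
        (Finset.disjoint_union_right.mpr ⟨djB, hJK.mono_left sj⟩)
        (diA)
        (Finset.disjoint_union_right.mpr ⟨hIJ.mono si sB, hIK.mono_left si⟩)
        (Finset.disjoint_union_right.mpr ⟨hIJ.mono sA sB, hIK.mono_left sA⟩)).mpr st6
      exact h.1
    have st8 : ({i}, {j}, A ∪ (B ∪ K)) ∈ M :=
      (h0 {j} {i} (A ∪ (B ∪ K))
        (hIJ.symm.mono sj si)
        (Finset.disjoint_union_right.mpr ⟨hIJ.symm.mono sj sA,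
          Finset.disjoint_union_right.mpr ⟨djB, hJK.mono_left sj⟩⟩)
        (Finset.disjoint_union_right.mpr ⟨diA,
          Finset.disjoint_union_right.mpr ⟨hIJ.mono si sB, hIK.mono_left si⟩⟩)).mp st7
    rw [hM'eq]
    exact st8
  · intro h
    exact ⟨{i}, {j}, M', h, Finset.mem_singleton_self i, Finset.mem_singleton_self j,
      Finset.Subset.refl _, Finset.subset_union_right⟩

/-- If an independence model `M` over a finite set `V` satisfies CI0, CI1
and CI2, then `e(M)` satisfies ci2. -/
theorem eMap_ci2_of_CI012 [Fintype V] (M : Set (Finset V × Finset V × Finset V))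
    (hM : ∀ T ∈ M, Disjoint T.1 T.2.1 ∧ Disjoint T.1 T.2.2 ∧ Disjoint T.2.1 T.2.2)
    (h0 : CI0 M) (h1 : CI1 M) (h2 : CI2 M) :
    ci2 (eMap M) := by
  intro i j k L hij hik hjk hiL hjL hkL h
  obtain ⟨e1, e2⟩ := h
  have e1' := (mem_eMap_iff M hM h0 h1 i j _).mp e1
  have e2' := (mem_eMap_iff M hM h0 h1 i k _).mp e2
  have key := h2 {i} {j} {k} L
    (Finset.disjoint_singleton.mpr hij)
    (Finset.disjoint_singleton.mpr hik)
    (Finset.disjoint_singleton_left.mpr hiL)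
    (Finset.disjoint_singleton.mpr hjk)
    (Finset.disjoint_singleton_left.mpr hjL)
    (Finset.disjoint_singleton_left.mpr hkL)
    ⟨by rwa [← Finset.insert_eq], by rwa [← Finset.insert_eq]⟩
  exact ⟨(mem_eMap_iff M hM h0 h1 i j L).mpr key.1,
    (mem_eMap_iff M hM h0 h1 i k L).mpr key.2⟩
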